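/- (Symmetry of uMOCP.) Let t₀ < t_e be reals, 𝒰 a set of control functions u : ℝ → (Fin m → ℝ), φ : (Fin n → ℝ) → 𝒰 → ℝ → (Fin n → ℝ) a map (flow) and ψ : (Fin n → ℝ) → (Fin n → ℝ) a map with ψ(φ x u t) = φ (ψ x) u t for all x, u, t ∈ [t₀, t_e]. Let η > 0 and β, δ ∈ ℝ, and for i = 1,…,k let C_i : (Fin n → ℝ) → (Fin m → ℝ) → ℝ and Φ_i : (Fin n → ℝ) → ℝ satisfy C_i (ψ x) v = η * C_i x v + β and Φ_i (ψ x) = η * Φ_i x + δ, and let g_j : (Fin n → ℝ) → (Fin m → ℝ) → ℝ (j = 1,…,l) satisfy g_j (ψ x) v = g_j x v. Define Ĵ_i(x₀, u) = ∫_{t₀}^{t_e} C_i (φ x₀ u t) (u t) dt + Φ_i (φ x₀ u t_e) and assume all the integrands involved are interval-integrable. Let 𝒵 ⊆ (Fin n → ℝ) be the uncertainty set; call u robustly feasible for x₀ if g_j (φ (x₀+α) u t) (u t) ≤ 0 for all j, all t ∈ [t₀, t_e] and all α ∈ 𝒵, and put Ĵ_𝒵(x₀, u) = {(Ĵ_1(x₀+α,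 u), …, Ĵ_k(x₀+α, u)) : α ∈ 𝒵} ⊆ (Fin k → ℝ). Then ū is robustly feasible for x₀ and set-based minmax robust efficient among the controls robustly feasible for x₀ (no such u' ≠ ū has Ĵ_𝒵(x₀, u') ⊆ Ĵ_𝒵(x₀, ū) − K) if and only if ū is robustly feasible and set-based minmax robust efficient for the transformed problem in which x₀ + α is replaced by ψ(x₀ + α) for every α ∈ 𝒵. -/

import Mathlib

open MeasureTheory

/-- The nonnegative orthant of `ℝ^k` with the origin removed. -/
def orthantK (k : ℕ) : Set (Fin k → ℝ) :=
  {z : Fin k → ℝ | ∀ i, 0 ≤ z i} \ {0}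

/-- Minkowski difference `B − K` of a set `B ⊆ ℝ^k` with the punctured
nonnegative orthant `K`. -/
def minusK (k : ℕ) (B : Set (Fin k → ℝ)) : Set (Fin k → ℝ) :=
  {x | ∃ b ∈ B, ∃ z ∈ orthantK k, x = b - z}


/-- Affine map preserves membership structure of `minusK`. -/
lemma minusK_affine_iff (k : ℕ) (η c : ℝ) (hη : 0 < η)
    (A B : Set (Fin k → ℝ)) :
    ((fun y : Fin k → ℝ => fun i => η * y i + c) '' A ⊆
      minusK k ((fun y : Fin k → ℝ => fun i => η * y i + c) '' B)) ↔
    A ⊆ minusK k B := by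
  set T : (Fin k → ℝ) → (Fin k → ℝ) := fun y => fun i => η * y i + c with hT
  constructor
  · intro h a ha
    obtain ⟨tb, ⟨b, hb, rfl⟩, z, ⟨hz1, hz2⟩, heq⟩ := h ⟨a, ha, rfl⟩
    refine ⟨b, hb, fun i => z i / η, ⟨fun i => div_nonneg (hz1 i) hη.le, ?_⟩, ?_⟩
    · intro h0
      apply hz2
      funext i
      have := congrFun h0 i
      simp only [Pi.zero_apply] at this ⊢
      field_simp at this
      simpa using this
    · funext i
      have := congrFun heq i
      simp only [T, Pi.sub_apply] at this ⊢
      field_simp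
      linarith
  · rintro h ta ⟨a, ha, rfl⟩
    obtain ⟨b, hb, z, ⟨hz1, hz2⟩, rfl⟩ := h ha
    refine ⟨T b, ⟨b, hb, rfl⟩, fun i => η * z i, ⟨fun i => mul_nonneg hη.le (hz1 i), ?_⟩, ?_⟩
    · intro h0
      apply hz2
      funext i
      have := congrFun h0 i
      simp only [Pi.zero_apply] at this ⊢
      exact (mul_eq_zero.mp this).resolve_left hη.ne'
    · funext i
      simp only [T, Pi.sub_apply]
      ring

/-- **Symmetry of uMOCP.**  If the flow `φ` is equivariant under the symmetry `ψ`,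
the running costs `C i` and the Mayer terms `Φ i` are invariant under `ψ` up to a
common positive-scale affine transformation (`η > 0`, `β`, `δ`), and the
constraints `g j` are invariant under `ψ`, then a control `ū` is robustly
feasible and set-based minmax robust efficient for the initial conditions
`x₀ + α`, `α ∈ 𝒵`, if and only if it is so for the transformed initial
conditions `ψ (x₀ + α)`, `α ∈ 𝒵`. -/
theorem symmetry_uMOCP (n m k l : ℕ) (t₀ t_e : ℝ) (ht : t₀ < t_e)
    (𝒰 : Set (ℝ → Fin m → ℝ))
    (φ : (Fin n → ℝ) → 𝒰 → ℝ → (Fin n → ℝ))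
    (ψ : (Fin n → ℝ) → (Fin n → ℝ))
    (hequiv : ∀ (x : Fin n → ℝ) (u : 𝒰), ∀ t ∈ Set.Icc t₀ t_e,
      ψ (φ x u t) = φ (ψ x) u t)
    (η β δ : ℝ) (hη : 0 < η)
    (C : Fin k → (Fin n → ℝ) → (Fin m → ℝ) → ℝ)
    (Φ : Fin k → (Fin n → ℝ) → ℝ)
    (hC : ∀ (i : Fin k) (x : Fin n → ℝ) (v : Fin m → ℝ),
      C i (ψ x) v = η * C i x v + β)
    (hΦ : ∀ (i : Fin k) (x : Fin n → ℝ), Φ i (ψ x) = η * Φ i x + δ)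
    (g : Fin l → (Fin n → ℝ) → (Fin m → ℝ) → ℝ)
    (hg : ∀ (j : Fin l) (x : Fin n → ℝ) (v : Fin m → ℝ), g j (ψ x) v = g j x v)
    (Jhat : (Fin n → ℝ) → 𝒰 → Fin k → ℝ)
    (hJhat : ∀ (x : Fin n → ℝ) (u : 𝒰) (i : Fin k),
      Jhat x u i = (∫ t in t₀..t_e, C i (φ x u t) ((u : ℝ → Fin m → ℝ) t))
        + Φ i (φ x u t_e))
    (hint : ∀ (x : Fin n → ℝ) (u : 𝒰) (i : Fin k),
      IntervalIntegrable (fun t => C i (φ x u t) ((u : ℝ → Fin m → ℝ) t))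
        volume t₀ t_e)
    (𝒵 : Set (Fin n → ℝ)) (x₀ : Fin n → ℝ) (ubar : 𝒰) :
    ((∀ (j : Fin l), ∀ α ∈ 𝒵, ∀ t ∈ Set.Icc t₀ t_e,
        g j (φ (x₀ + α) ubar t) ((ubar : ℝ → Fin m → ℝ) t) ≤ 0) ∧
      ¬ ∃ u' : 𝒰, u' ≠ ubar ∧
        (∀ (j : Fin l), ∀ α ∈ 𝒵, ∀ t ∈ Set.Icc t₀ t_e,
          g j (φ (x₀ + α) u' t) ((u' : ℝ → Fin m → ℝ) t) ≤ 0) ∧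
        {y | ∃ α ∈ 𝒵, y = Jhat (x₀ + α) u'} ⊆
          minusK k {y | ∃ α ∈ 𝒵, y = Jhat (x₀ + α) ubar}) ↔
    ((∀ (j : Fin l), ∀ α ∈ 𝒵, ∀ t ∈ Set.Icc t₀ t_e,
        g j (φ (ψ (x₀ + α)) ubar t) ((ubar : ℝ → Fin m → ℝ) t) ≤ 0) ∧
      ¬ ∃ u' : 𝒰, u' ≠ ubar ∧
        (∀ (j : Fin l), ∀ α ∈ 𝒵, ∀ t ∈ Set.Icc t₀ t_e,
          g j (φ (ψ (x₀ + α)) u' t) ((u' : ℝ → Fin m → ℝ) t) ≤ 0) ∧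
        {y | ∃ α ∈ 𝒵, y = Jhat (ψ (x₀ + α)) u'} ⊆
          minusK k {y | ∃ α ∈ 𝒵, y = Jhat (ψ (x₀ + α)) ubar}) := by
  set c : ℝ := β * (t_e - t₀) + δ with hc
  -- transformation law for Jhat
  have hJ : ∀ (x : Fin n → ℝ) (u : 𝒰) (i : Fin k),
      Jhat (ψ x) u i = η * Jhat x u i + c := by
    intro x u i
    rw [hJhat, hJhat]
    have hcong : (∫ t in t₀..t_e, C i (φ (ψ x) u t) ((u : ℝ → Fin m → ℝ) t))
        = ∫ t in t₀..t_e, (η * C i (φ x u t) ((u : ℝ → Fin m → ℝ) t) + β) := by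
      apply intervalIntegral.integral_congr
      intro t htI
      rw [Set.uIcc_of_le ht.le] at htI
      simp only
      rw [← hequiv x u t htI, hC]
    rw [hcong, intervalIntegral.integral_add ((hint x u i).const_mul η)
      intervalIntegrable_const, intervalIntegral.integral_const_mul,
      intervalIntegral.integral_const, ← hequiv x u t_e ⟨ht.le, le_refl t_e⟩, hΦ]
    simp only [smul_eq_mul, hc]
    ring
  -- feasibility is invariant
  have hfeas : ∀ (u : 𝒰),
      (∀ (j : Fin l), ∀ α ∈ 𝒵, ∀ t ∈ Set.Icc t₀ t_e,
        g j (φ (ψ (x₀ + α)) u t) ((u : ℝ → Fin m → ℝ) t) ≤ 0) ↔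
      (∀ (j : Fin l), ∀ α ∈ 𝒵, ∀ t ∈ Set.Icc t₀ t_e,
        g j (φ (x₀ + α) u t) ((u : ℝ → Fin m → ℝ) t) ≤ 0) := by
    intro u
    constructor <;> intro h j α hα t htI <;> have h' := h j α hα t htI <;>
      rwa [← hequiv (x₀ + α) u t htI, hg] at *
  -- the objective sets transform affinely
  have hset : ∀ (u : 𝒰),
      {y | ∃ α ∈ 𝒵, y = Jhat (ψ (x₀ + α)) u}
        = (fun y : Fin k → ℝ => fun i => η * y i + c) ''
          {y | ∃ α ∈ 𝒵, y = Jhat (x₀ + α) u} := by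
    intro u
    ext y
    constructor
    · rintro ⟨α, hα, rfl⟩
      exact ⟨Jhat (x₀ + α) u, ⟨α, hα, rfl⟩, by funext i; rw [hJ]⟩
    · rintro ⟨z, ⟨α, hα, rfl⟩, rfl⟩
      exact ⟨α, hα, by funext i; rw [hJ]⟩
  have hsub : ∀ (u' : 𝒰),
      ({y | ∃ α ∈ 𝒵, y = Jhat (ψ (x₀ + α)) u'} ⊆
        minusK k {y | ∃ α ∈ 𝒵, y = Jhat (ψ (x₀ + α)) ubar}) ↔
      ({y | ∃ α ∈ 𝒵, y = Jhat (x₀ + α) u'} ⊆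
        minusK k {y | ∃ α ∈ 𝒵, y = Jhat (x₀ + α) ubar}) := by
    intro u'
    rw [hset u', hset ubar, minusK_affine_iff k η c hη]
  constructor
  · rintro ⟨h1, h2⟩
    refine ⟨(hfeas ubar).mpr h1, fun ⟨u', hne, hf, hs⟩ =>
      h2 ⟨u', hne, (hfeas u').mp hf, (hsub u').mp hs⟩⟩
  · rintro ⟨h1, h2⟩
    refine ⟨(hfeas ubar).mp h1, fun ⟨u', hne, hf, hs⟩ =>
      h2 ⟨u', hne, (hfeas u').mpr hf, (hsub u').mpr hs⟩⟩
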